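/- Let X and Y be Banach spaces, V a closed subspace of X such that the space of continuous linear maps L(V,Y) is separable, G ⊆ X an open set, and f : G → Y a continuous mapping. Then the set of all points a ∈ G such that f is Fréchet differentiable at a along V but is not strictly differentiable at a along V is a meager (first category) set. -/

import Mathlib

open Metric Set Topology

variable {X Y : Type*} [NormedAddCommGroup X] [NormedSpace ℝ X] [CompleteSpace X]
  [NormedAddCommGroup Y] [NormedSpace ℝ Y] [CompleteSpace Y]

/-- `f` is Fréchet differentiable at `a` along the subspace `V`:
the map `v ↦ f (a + v)`, `v ∈ V`, is Fréchet differentiable at `0 ∈ V`. -/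
def FrechetDiffAlong (f : X → Y) (V : Submodule ℝ X) (a : X) : Prop :=
  DifferentiableAt ℝ (fun v : V => f (a + (v : X))) (0 : V)

/-- The derivative of `f` at `a` along `V`. -/
noncomputable def derivAlong (f : X → Y) (V : Submodule ℝ X) (a : X) : V →L[ℝ] Y :=
  fderiv ℝ (fun v : V => f (a + (v : X))) (0 : V)

/-- `f` is strictly differentiable at `a` along `V`. -/
def StrictDiffAlong (f : X → Y) (V : Submodule ℝ X) (a : X) : Prop :=
  FrechetDiffAlong f V a ∧
    ∀ ε > (0 : ℝ), ∃ δ > (0 : ℝ), ∀ (x : X) (v : V),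
      x ∈ ball a δ → x + (v : X) ∈ ball a δ →
        ‖f (x + (v : X)) - f x - derivAlong f V a v‖ ≤ ε * ‖(v : X)‖

set_option maxHeartbeats 1000000 in
set_option synthInstance.maxHeartbeats 400000 in
theorem meagre_frechetAlong_not_strictAlong
    (V : Submodule ℝ X) (hVclosed : IsClosed (V : Set X))
    [TopologicalSpace.SeparableSpace (V →L[ℝ] Y)]
    (G : Set X) (hG : IsOpen G) (f : X → Y) (hf : ContinuousOn f G) :
    IsMeagre {a ∈ G | FrechetDiffAlong f V a ∧ ¬ StrictDiffAlong f V a} := by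
  obtain ⟨L, hL⟩ := TopologicalSpace.exists_dense_seq (V →L[ℝ] Y)
  set S : ℕ → ℕ → ℕ → Set X := fun m k n =>
    {a | ENNReal.ofReal (1 / (n + 1)) ≤ EMetric.infEdist a Gᶜ ∧
      ∀ v : V, ‖(v : X)‖ < 1 / (n + 1) →
        ‖f (a + (v : X)) - f a - L k v‖ ≤ (1 / (m + 1)) * ‖(v : X)‖} with hSdef
  have hpos : ∀ n : ℕ, (0:ℝ) < 1 / (n+1) := fun n => by positivity
  -- membership in the first component gives a ball inside `G`
  have hball : ∀ (n : ℕ) (a : X), ENNReal.ofReal (1 / (n+1) : ℝ) ≤ EMetric.infEdist a Gᶜ →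
      ∀ y : X, dist y a < 1 / (n+1) → y ∈ G := by
    intro n a ha y hy
    by_contra hyG
    have h1 : EMetric.infEdist a Gᶜ ≤ edist a y := EMetric.infEdist_le_edist_of_mem hyG
    rw [edist_dist] at h1
    have h2 : ENNReal.ofReal (dist a y) < ENNReal.ofReal (1/(n+1)) :=
      (ENNReal.ofReal_lt_ofReal_iff (hpos n)).mpr (by rwa [dist_comm])
    exact absurd (ha.trans h1) (not_le.mpr h2)
  -- each `S m k n` is closed
  have hSclosed : ∀ m k n, IsClosed (S m k n) := by
    intro m k n
    have hCclosed : IsClosed {a : X | ENNReal.ofReal (1/(n+1) : ℝ) ≤ EMetric.infEdist a Gᶜ} :=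
      isClosed_le continuous_const EMetric.continuous_infEdist
    refine isClosed_of_closure_subset ?_
    intro a ha
    have hC : ENNReal.ofReal (1/(n+1):ℝ) ≤ EMetric.infEdist a Gᶜ :=
      closure_minimal (fun x hx => hx.1) hCclosed ha
    refine ⟨hC, fun v hv => ?_⟩
    have haG : a ∈ G := hball n a hC a (by simpa using hpos n)
    have havG : a + (v:X) ∈ G := hball n a hC _ (by
      rw [dist_eq_norm, add_sub_cancel_left]; exact hv)
    have hga : ContinuousAt (fun x : X => ‖f (x + (v:X)) - f x - L k v‖) a := by
      have h1 : ContinuousAt f a := hf.continuousAt (hG.mem_nhds haG)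
      have h2 : ContinuousAt (fun x : X => f (x + (v:X))) a :=
        ContinuousAt.comp (hf.continuousAt (hG.mem_nhds havG))
          (continuousAt_id.add continuousAt_const)
      exact ((h2.sub h1).sub continuousAt_const).norm
    haveI : (𝓝[S m k n] a).NeBot := mem_closure_iff_nhdsWithin_neBot.mp ha
    refine le_of_tendsto (hga.continuousWithinAt : ContinuousWithinAt _ (S m k n) a) ?_
    filter_upwards [self_mem_nhdsWithin] with x hx using hx.2 v hv
  -- the bad set is contained in the union of frontiers of the `S m k n`
  have hkey : {a ∈ G | FrechetDiffAlong f V a ∧ ¬ StrictDiffAlong f V a} ⊆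
      ⋃ m, ⋃ k, ⋃ n, frontier (S m k n) := by
    rintro a ⟨haG, hdiff, hnstrict⟩
    have hns : ¬ ∀ ε > (0:ℝ), ∃ δ > (0:ℝ), ∀ (x : X) (v : V),
        x ∈ ball a δ → x + (v : X) ∈ ball a δ →
          ‖f (x + (v : X)) - f x - derivAlong f V a v‖ ≤ ε * ‖(v : X)‖ :=
      fun h => hnstrict ⟨hdiff, h⟩
    push_neg at hns
    obtain ⟨ε₀, hε₀, hbad⟩ := hns
    obtain ⟨m, hm⟩ := exists_nat_one_div_lt (show (0:ℝ) < ε₀/3 by linarith)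
    set c₁ : ℝ := 1 / (m+1) with hc₁def
    have hc₁ : 0 < c₁ := hpos m
    set L' := derivAlong f V a with hL'def
    have hFD : HasFDerivAt (fun v : V => f (a + (v : X))) L' (0 : V) := hdiff.hasFDerivAt
    have hlo := hFD.isLittleO.def (show (0:ℝ) < c₁/2 by positivity)
    rw [Metric.eventually_nhds_iff] at hlo
    obtain ⟨r, hr, hlor⟩ := hlo
    have hone : ∀ v : V, ‖(v:X)‖ < r →
        ‖f (a + (v:X)) - f a - L' v‖ ≤ (c₁/2) * ‖(v:X)‖ := by
      intro v hv
      have hv' : dist v (0:V) < r := by rw [dist_zero_right]; exact hv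
      have := hlor hv'
      simp only [sub_zero, ZeroMemClass.coe_zero, add_zero] at this
      exact this
    obtain ⟨k, hk⟩ := hL.exists_dist_lt L' (show (0:ℝ) < c₁/2 by positivity)
    have hkn : ‖L' - L k‖ < c₁/2 := lt_of_eq_of_lt (dist_eq_norm L' (L k)).symm hk
    obtain ⟨c, hc0, hce⟩ := EMetric.exists_real_pos_lt_infEdist_of_notMem_closure (by
      rw [hG.isClosed_compl.closure_eq]; simpa using haG)
    obtain ⟨n, hn⟩ := exists_nat_one_div_lt (lt_min hc0 hr : (0:ℝ) < min c r)
    have hnc : (1:ℝ)/(n+1) < c := hn.trans_le (min_le_left _ _)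
    have hnr : (1:ℝ)/(n+1) < r := hn.trans_le (min_le_right _ _)
    have hCa : ENNReal.ofReal (1/(n+1):ℝ) ≤ EMetric.infEdist a Gᶜ :=
      le_of_lt <| lt_of_le_of_lt (ENNReal.ofReal_le_ofReal hnc.le) hce
    -- the pointwise bound with `L k` instead of `L'`
    have hLbound : ∀ (x : X) (v : V), ‖f (x + (v:X)) - f x - L k v‖ ≤
        ‖f (x + (v:X)) - f x - L' v‖ + (c₁/2) * ‖(v:X)‖ := by
      intro x v
      have h2 : ‖(L' - L k) v‖ ≤ (c₁/2) * ‖(v:X)‖ := by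
        calc ‖(L' - L k) v‖ ≤ ‖L' - L k‖ * ‖(v:X)‖ := (L' - L k).le_opNorm v
          _ ≤ (c₁/2) * ‖(v:X)‖ :=
            mul_le_mul_of_nonneg_right hkn.le (norm_nonneg _)
      calc ‖f (x + (v:X)) - f x - L k v‖
          = ‖(f (x + (v:X)) - f x - L' v) + (L' - L k) v‖ := by
            rw [ContinuousLinearMap.sub_apply]; congr 1; abel
        _ ≤ ‖f (x + (v:X)) - f x - L' v‖ + ‖(L' - L k) v‖ := norm_add_le _ _
        _ ≤ _ := by linarith [h2]
    have haS : a ∈ S m k n := by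
      refine ⟨hCa, fun v hv => ?_⟩
      have h1 := hone v (hv.trans hnr)
      calc ‖f (a + (v:X)) - f a - L k v‖
          ≤ ‖f (a + (v:X)) - f a - L' v‖ + (c₁/2) * ‖(v:X)‖ := hLbound a v
        _ ≤ (c₁/2) * ‖(v:X)‖ + (c₁/2) * ‖(v:X)‖ := by linarith
        _ = c₁ * ‖(v:X)‖ := by ring
    have hnotint : a ∉ interior (S m k n) := by
      intro hint
      obtain ⟨ρ, hρ, hsub⟩ := Metric.mem_nhds_iff.mp (mem_interior_iff_mem_nhds.mp hint)
      have hδ : 0 < min ρ ((1/(n+1:ℝ))/2) := lt_min hρ (by positivity)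
      obtain ⟨x, v, hx, hxv, hgt⟩ := hbad _ hδ
      have hxρ : x ∈ ball a ρ := mem_of_mem_of_subset hx
        (ball_subset_ball (min_le_left _ _))
      have hxS : x ∈ S m k n := hsub hxρ
      have hvn : ‖(v:X)‖ < 1/(n+1) := by
        have he : ‖(v:X)‖ = dist (x + (v:X)) x := by
          rw [dist_eq_norm, add_sub_cancel_left]
        rw [he]
        have h1 : dist (x + (v:X)) x ≤ dist (x + (v:X)) a + dist a x := dist_triangle _ _ _
        have h2 : dist (x + (v:X)) a < min ρ ((1/(n+1:ℝ))/2) := hxv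
        have h3 : dist a x < min ρ ((1/(n+1:ℝ))/2) := by rw [dist_comm]; exact hx
        have h4 : min ρ ((1/(n+1:ℝ))/2) ≤ (1/(n+1:ℝ))/2 := min_le_right _ _
        linarith
      have hest := hxS.2 v hvn
      -- reverse the triangle inequality to bound the `L'` increment
      have hrev : ‖f (x + (v:X)) - f x - L' v‖ ≤ (c₁ + c₁/2) * ‖(v:X)‖ := by
        have h2 : ‖(L' - L k) v‖ ≤ (c₁/2) * ‖(v:X)‖ := by
          calc ‖(L' - L k) v‖ ≤ ‖L' - L k‖ * ‖(v:X)‖ := (L' - L k).le_opNorm v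
            _ ≤ (c₁/2) * ‖(v:X)‖ :=
              mul_le_mul_of_nonneg_right hkn.le (norm_nonneg _)
        calc ‖f (x + (v:X)) - f x - L' v‖
            = ‖(f (x + (v:X)) - f x - L k v) - (L' - L k) v‖ := by
              rw [ContinuousLinearMap.sub_apply]; congr 1; abel
          _ ≤ ‖f (x + (v:X)) - f x - L k v‖ + ‖(L' - L k) v‖ := norm_sub_le _ _
          _ ≤ c₁ * ‖(v:X)‖ + (c₁/2) * ‖(v:X)‖ := add_le_add hest h2
          _ = (c₁ + c₁/2) * ‖(v:X)‖ := by ring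
      have hgt' : ε₀ * ‖(v:X)‖ < ‖f (x + (v:X)) - f x - L' v‖ := hgt
      have ht : (0:ℝ) ≤ ‖(v:X)‖ := norm_nonneg _
      have h5 : (c₁ + c₁/2) * ‖(v:X)‖ ≤ (ε₀/2) * ‖(v:X)‖ :=
        mul_le_mul_of_nonneg_right (by linarith) ht
      have h6 : (0:ℝ) ≤ (ε₀/2) * ‖(v:X)‖ := mul_nonneg (by linarith) ht
      nlinarith
    exact mem_iUnion.mpr ⟨m, mem_iUnion.mpr ⟨k, mem_iUnion.mpr ⟨n, by
      rw [(hSclosed m k n).frontier_eq]; exact ⟨haS, hnotint⟩⟩⟩⟩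
  -- each frontier is closed nowhere dense, hence meagre; conclude by countable union
  have hfmeagre : ∀ m k n, IsMeagre (frontier (S m k n)) := by
    intro m k n
    rw [isMeagre_iff_countable_union_isNowhereDense]
    refine ⟨{frontier (S m k n)}, ?_, countable_singleton _, by simp⟩
    intro t ht
    rw [mem_singleton_iff] at ht
    subst ht
    rw [IsNowhereDense, isClosed_frontier.closure_eq]
    exact interior_frontier (hSclosed m k n)
  -- reindex the triple union by ℕ
  let e : ℕ ≃ ℕ × ℕ × ℕ := (Denumerable.eqv (ℕ × ℕ × ℕ)).symm
  have hmeagre : IsMeagre (⋃ i : ℕ, frontier (S (e i).1 (e i).2.1 (e i).2.2)) :=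
    isMeagre_iUnion fun i => hfmeagre _ _ _
  refine hmeagre.mono ?_
  intro a ha
  obtain ⟨m, hmem⟩ := mem_iUnion.mp (hkey ha)
  obtain ⟨k, hmem⟩ := mem_iUnion.mp hmem
  obtain ⟨n, hmem⟩ := mem_iUnion.mp hmem
  exact mem_iUnion.mpr ⟨e.symm (m, k, n), by
    simpa only [Equiv.apply_symm_apply] using hmem⟩
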